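/- Let X₁,…,X_k be i.i.d. real random variables, let u < v be reals, let N ≥ 1 be an integer, and partition [u,v) into N consecutive intervals I₁,…,I_N of equal length. Suppose P[X₁ ∈ [u,v)] ≥ χ for some χ ∈ (0,1]. Then, with probability at least 1 − 2·exp(−kχ²/(8N²)), there exists j ∈ {1,…,N} such that #{i ∈ {1,…,k} : X_i ∈ I_j} ≥ kχ/(2N). -/

import Mathlib

open scoped Classical
open Real MeasureTheory ProbabilityTheory

/-- Every point of `[u,v)` lies in one of the `N` bins. -/
lemma mem_some_bin {u v : ℝ} (huv : u < v) {N : ℕ} (hN : 1 ≤ N) {x : ℝ}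
    (hx : x ∈ Set.Ico u v) :
    ∃ j ∈ Finset.range N,
      x ∈ Set.Ico (u + (j : ℝ) * ((v - u) / N)) (u + ((j : ℝ) + 1) * ((v - u) / N)) := by
  have hN0 : (0 : ℝ) < N := by exact_mod_cast hN
  have hΔ : (0 : ℝ) < (v - u) / N := div_pos (by linarith [hx.1, hx.2, huv]) hN0
  set Δ : ℝ := (v - u) / N with hΔdef
  set r : ℝ := (x - u) / Δ with hr
  have hr0 : 0 ≤ r := div_nonneg (by linarith [hx.1]) hΔ.le
  refine ⟨⌊r⌋₊, ?_, ?_, ?_⟩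
  · rw [Finset.mem_range]
    rw [Nat.floor_lt hr0, hr, div_lt_iff₀ hΔ]
    have : (N : ℝ) * Δ = v - u := by
      rw [hΔdef]; field_simp
    linarith [hx.2, this]
  · have h1 : (⌊r⌋₊ : ℝ) ≤ r := Nat.floor_le hr0
    have : (⌊r⌋₊ : ℝ) * Δ ≤ r * Δ := mul_le_mul_of_nonneg_right h1 hΔ.le
    have hrΔ : r * Δ = x - u := by rw [hr]; field_simp
    linarith
  · have h2 : r < (⌊r⌋₊ : ℝ) + 1 := Nat.lt_floor_add_one r
    have : r * Δ < ((⌊r⌋₊ : ℝ) + 1) * Δ := mul_lt_mul_of_pos_right h2 hΔ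
    have hrΔ : r * Δ = x - u := by rw [hr]; field_simp
    linarith

theorem abundant_bin_exists
    {Ω : Type*} [MeasureSpace Ω] [IsProbabilityMeasure (volume : Measure Ω)]
    (k : ℕ) (hk : 1 ≤ k) (X : Fin k → Ω → ℝ)
    (hmeas : ∀ i, Measurable (X i))
    (hindep : iIndepFun X volume)
    (hident : ∀ i j, IdentDistrib (X i) (X j) volume volume)
    (u v : ℝ) (huv : u < v) (N : ℕ) (hN : 1 ≤ N)
    (χ : ℝ) (hχ0 : 0 < χ) (hχ1 : χ ≤ 1)
    (hmass : χ ≤ (volume {ω | X ⟨0, hk⟩ ω ∈ Set.Ico u v}).toReal) :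
    1 - 2 * exp (-((k : ℝ) * χ ^ 2 / (8 * (N : ℝ) ^ 2))) ≤
      (volume {ω | ∃ j ∈ Finset.range N,
        (k : ℝ) * χ / (2 * N) ≤
          ((Finset.univ.filter (fun i : Fin k =>
            X i ω ∈ Set.Ico (u + j * ((v - u) / N))
              (u + (j + 1) * ((v - u) / N)))).card : ℝ)}).toReal := by
  classical
  set μ : Measure Ω := volume
  set f : ℝ → ℝ := (Set.Ico u v).indicator (fun _ => (1:ℝ)) with hf
  have hfmeas : Measurable f := (measurable_const).indicator measurableSet_Ico
  set Y : Fin k → Ω → ℝ := fun i => f ∘ X i with hY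
  have hYmeas : ∀ i, Measurable (Y i) := fun i => hfmeas.comp (hmeas i)
  have hYindep : iIndepFun Y μ :=
    hindep.comp (fun _ => f) (fun _ => hfmeas)
  set t : ℝ := -Real.log 2 with ht
  have hexpt : Real.exp t = 2⁻¹ := by
    rw [ht, Real.exp_neg, Real.exp_log two_pos]
  have hA : ∀ i : Fin k, MeasurableSet (X i ⁻¹' Set.Ico u v) :=
    fun i => (hmeas i) measurableSet_Ico
  have hrepr : ∀ i : Fin k, (fun ω => Real.exp (t * Y i ω)) =
      fun ω => (X i ⁻¹' Set.Ico u v).indicator (fun _ => (2:ℝ)⁻¹ - 1) ω + 1 := by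
    intro i
    funext ω
    by_cases h : X i ω ∈ Set.Ico u v
    · simp [hY, hf, Set.indicator_of_mem, h, Set.mem_preimage, hexpt]
    · simp [hY, hf, Set.indicator_of_notMem, h, Set.mem_preimage]
  have hint : ∀ i : Fin k, Integrable (fun ω => Real.exp (t * Y i ω)) μ := by
    intro i
    rw [hrepr i]
    exact ((integrable_const _).indicator (hA i)).add (integrable_const 1)
  have hp : ∀ i : Fin k, χ ≤ (μ (X i ⁻¹' Set.Ico u v)).toReal := by
    intro i
    have := (hident i ⟨0, hk⟩).measure_mem_eq (measurableSet_Ico (a := u) (b := v))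
    rw [show X i ⁻¹' Set.Ico u v = {ω | X i ω ∈ Set.Ico u v} from rfl]
    calc χ ≤ (μ {ω | X ⟨0, hk⟩ ω ∈ Set.Ico u v}).toReal := hmass
      _ = (μ {ω | X i ω ∈ Set.Ico u v}).toReal := by
          rw [show {ω | X i ω ∈ Set.Ico u v} = X i ⁻¹' Set.Ico u v from rfl,
            show {ω | X ⟨0, hk⟩ ω ∈ Set.Ico u v} = X ⟨0, hk⟩ ⁻¹' Set.Ico u v from rfl, this]
  have hmgf : ∀ i : Fin k, mgf (Y i) μ t ≤ Real.exp (-(χ/2)) := by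
    intro i
    have hcalc : mgf (Y i) μ t = (μ (X i ⁻¹' Set.Ico u v)).toReal * ((2:ℝ)⁻¹ - 1) + 1 := by
      rw [mgf, hrepr i, integral_add ((integrable_const _).indicator (hA i)) (integrable_const 1),
        integral_indicator_const _ (hA i)]
      simp [smul_eq_mul, mul_comm, measureReal_def]
    have h1 : mgf (Y i) μ t ≤ 1 - χ/2 := by
      rw [hcalc]
      have := hp i
      nlinarith
    calc mgf (Y i) μ t ≤ 1 - χ/2 := h1
      _ ≤ Real.exp (-(χ/2)) := by linarith [Real.add_one_le_exp (-(χ/2))]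
  -- Chernoff bound on the total count
  have ht_nonpos : t ≤ 0 := by
    rw [ht]; simp [Real.log_nonneg one_le_two]
  have hintS : Integrable (fun ω => Real.exp (t * (∑ i ∈ Finset.univ, Y i) ω)) μ :=
    hYindep.integrable_exp_mul_sum hYmeas (fun i _ => hint i)
  have hchern := measure_le_le_exp_mul_mgf (μ := μ) (X := ∑ i ∈ Finset.univ, Y i)
    ((k : ℝ) * χ / 2) ht_nonpos hintS
  have hmgfS : mgf (∑ i ∈ Finset.univ, Y i) μ t ≤ Real.exp ((k : ℝ) * (-(χ/2))) := by
    rw [hYindep.mgf_sum hYmeas Finset.univ]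
    calc ∏ i : Fin k, mgf (Y i) μ t ≤ ∏ _i : Fin k, Real.exp (-(χ/2)) :=
          Finset.prod_le_prod (fun i _ => mgf_nonneg) (fun i _ => hmgf i)
      _ = Real.exp (-(χ/2)) ^ k := by simp
      _ = Real.exp ((k : ℝ) * (-(χ/2))) := by rw [← Real.exp_nat_mul]
  have hN0 : (0 : ℝ) < N := by exact_mod_cast hN
  have hk0 : (0 : ℝ) ≤ k := Nat.cast_nonneg k
  have hbound : (μ {ω | (∑ i ∈ Finset.univ, Y i) ω ≤ (k : ℝ) * χ / 2}).toReal ≤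
      Real.exp (-((k : ℝ) * χ ^ 2 / (8 * (N : ℝ) ^ 2))) := by
    refine hchern.trans ?_
    calc Real.exp (-t * ((k:ℝ) * χ / 2)) * mgf (∑ i ∈ Finset.univ, Y i) μ t
        ≤ Real.exp (-t * ((k:ℝ) * χ / 2)) * Real.exp ((k : ℝ) * (-(χ/2))) := by
          exact mul_le_mul_of_nonneg_left hmgfS (Real.exp_nonneg _)
      _ = Real.exp (Real.log 2 * ((k:ℝ) * χ / 2) + (k : ℝ) * (-(χ/2))) := by
          rw [← Real.exp_add, ht, neg_neg]
      _ ≤ Real.exp (-((k : ℝ) * χ ^ 2 / (8 * (N : ℝ) ^ 2))) := by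
          apply Real.exp_le_exp.mpr
          have hlog : Real.log 2 < 0.6931471808 := Real.log_two_lt_d9
          have hkχ : (0:ℝ) ≤ (k:ℝ) * χ := mul_nonneg hk0 hχ0.le
          have hN1' : (1:ℝ) ≤ (N:ℝ) := by exact_mod_cast hN
          have hN1 : (1:ℝ) ≤ (N:ℝ)^2 := by nlinarith
          have h1 : (k : ℝ) * χ ^ 2 / (8 * (N : ℝ) ^ 2) ≤ (k : ℝ) * χ / 8 := by
            have h2 : (k : ℝ) * χ ^ 2 / (8 * (N : ℝ) ^ 2) ≤ (k:ℝ) * χ^2 / 8 := by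
              apply div_le_div_of_nonneg_left (by positivity) (by norm_num) (by linarith)
            have hχ2 : χ^2 ≤ χ := by nlinarith
            have h3 : (k:ℝ)*χ^2/8 ≤ (k:ℝ)*χ/8 := by
              apply div_le_div_of_nonneg_right ?_ (by norm_num) <;> nlinarith
            linarith
          nlinarith [h1, hkχ, mul_le_mul_of_nonneg_left hlog.le hkχ]
  -- event inclusion
  set E : Set Ω := {ω | ∃ j ∈ Finset.range N,
        (k : ℝ) * χ / (2 * N) ≤
          ((Finset.univ.filter (fun i : Fin k =>
            X i ω ∈ Set.Ico (u + j * ((v - u) / N))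
              (u + (j + 1) * ((v - u) / N)))).card : ℝ)} with hE
  have hsubset : Eᶜ ⊆ {ω | (∑ i ∈ Finset.univ, Y i) ω ≤ (k : ℝ) * χ / 2} := by
    intro ω hω
    simp only [hE, Set.mem_compl_iff, Set.mem_setOf_eq, not_exists, not_le] at hω
    push_neg at hω
    have hSval : (∑ i ∈ Finset.univ, Y i) ω =
        ((Finset.univ.filter (fun i : Fin k => X i ω ∈ Set.Ico u v)).card : ℝ) := by
      rw [Finset.sum_apply]
      simp only [hY, hf, Function.comp_apply, Set.indicator_apply]
      rw [Finset.sum_boole]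
    have hcard : ((Finset.univ.filter (fun i : Fin k => X i ω ∈ Set.Ico u v)).card : ℝ) ≤
        ∑ j ∈ Finset.range N, ((Finset.univ.filter (fun i : Fin k =>
            X i ω ∈ Set.Ico (u + (j:ℝ) * ((v - u) / N))
              (u + ((j:ℝ) + 1) * ((v - u) / N)))).card : ℝ) := by
      have hsub : (Finset.univ.filter (fun i : Fin k => X i ω ∈ Set.Ico u v)) ⊆
          (Finset.range N).biUnion (fun j => Finset.univ.filter (fun i : Fin k =>
            X i ω ∈ Set.Ico (u + (j:ℝ) * ((v - u) / N))
              (u + ((j:ℝ) + 1) * ((v - u) / N)))) := by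
        intro i hi
        rw [Finset.mem_filter] at hi
        obtain ⟨j, hj, hmem⟩ := mem_some_bin huv hN hi.2
        exact Finset.mem_biUnion.mpr ⟨j, hj, Finset.mem_filter.mpr ⟨Finset.mem_univ _, hmem⟩⟩
      calc ((Finset.univ.filter (fun i : Fin k => X i ω ∈ Set.Ico u v)).card : ℝ)
          ≤ (((Finset.range N).biUnion (fun j => Finset.univ.filter (fun i : Fin k =>
            X i ω ∈ Set.Ico (u + (j:ℝ) * ((v - u) / N))
              (u + ((j:ℝ) + 1) * ((v - u) / N))))).card : ℝ) := by
            exact_mod_cast Finset.card_le_card hsub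
        _ ≤ _ := by exact_mod_cast Finset.card_biUnion_le
    have hlt : ∑ j ∈ Finset.range N, ((Finset.univ.filter (fun i : Fin k =>
            X i ω ∈ Set.Ico (u + (j:ℝ) * ((v - u) / N))
              (u + ((j:ℝ) + 1) * ((v - u) / N)))).card : ℝ) <
        ∑ _j ∈ Finset.range N, (k:ℝ) * χ / (2 * N) := by
      apply Finset.sum_lt_sum_of_nonempty (Finset.nonempty_range_iff.mpr (by omega))
      intro j hj
      exact hω j hj
    have hconst : ∑ _j ∈ Finset.range N, (k:ℝ) * χ / (2 * N) = (k:ℝ) * χ / 2 := by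
      rw [Finset.sum_const, Finset.card_range, nsmul_eq_mul]
      field_simp
    show (∑ i ∈ Finset.univ, Y i) ω ≤ (k : ℝ) * χ / 2
    rw [hSval]
    linarith
  have hEc : (μ Eᶜ).toReal ≤ Real.exp (-((k : ℝ) * χ ^ 2 / (8 * (N : ℝ) ^ 2))) := by
    refine le_trans (ENNReal.toReal_mono (measure_ne_top _ _) (measure_mono hsubset)) hbound
  have hsplit : (1:ℝ) ≤ (μ E).toReal + (μ Eᶜ).toReal := by
    have h1 : μ Set.univ ≤ μ E + μ Eᶜ := by
      rw [← Set.union_compl_self E]; exact measure_union_le _ _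
    rw [measure_univ] at h1
    have := ENNReal.toReal_mono
      (by finiteness : μ E + μ Eᶜ ≠ ⊤) h1
    rwa [ENNReal.toReal_one, ENNReal.toReal_add (measure_ne_top _ _) (measure_ne_top _ _)] at this
  have hfinal : Real.exp (-((k : ℝ) * χ ^ 2 / (8 * (N : ℝ) ^ 2))) ≤
      2 * Real.exp (-((k : ℝ) * χ ^ 2 / (8 * (N : ℝ) ^ 2))) := by
    nlinarith [Real.exp_nonneg (-((k : ℝ) * χ ^ 2 / (8 * (N : ℝ) ^ 2)))]
  linarith
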